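/- If A, B, C are iid random variables with values in ℝ and there exists a real number a with P(A = a) > 0, then P(2A < B + C) < 2/3 strictly. -/

import Mathlib

open MeasureTheory ENNReal

lemma perm_invariant6 (μ : Measure ℝ) [IsProbabilityMeasure μ] (σ : Equiv.Perm (Fin 3))
    (S : Set (Fin 3 → ℝ)) (hS : MeasurableSet S) :
    (Measure.pi fun _ : Fin 3 => μ) {y | (fun i => y (σ.symm i)) ∈ S}
      = (Measure.pi fun _ : Fin 3 => μ) S := by
  have h : MeasurePreserving (MeasurableEquiv.piCongrLeft (fun _ : Fin 3 => ℝ) σ)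
      (Measure.pi fun _ : Fin 3 => μ) (Measure.pi fun _ : Fin 3 => μ) :=
    measurePreserving_piCongrLeft (fun _ => μ) σ
  have hfun : ∀ y, (MeasurableEquiv.piCongrLeft (fun _ : Fin 3 => ℝ) σ) y
      = fun i => y (σ.symm i) := by
    intro y; funext i
    simp [MeasurableEquiv.piCongrLeft, Equiv.piCongrLeft_apply_eq_cast]
  have hset : {y : Fin 3 → ℝ | (fun i => y (σ.symm i)) ∈ S}
      = (MeasurableEquiv.piCongrLeft (fun _ : Fin 3 => ℝ) σ) ⁻¹' S := by
    ext y; simp [Set.mem_preimage, hfun y]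
  rw [hset]
  exact h.measure_preimage hS.nullMeasurableSet

/-- If A, B, C are iid real-valued random variables whose common law `μ` has an
atom (some `a` with `μ {a} > 0`), then `P(2A < B + C) < 2/3` strictly. -/
theorem stmt6 (μ : Measure ℝ) [IsProbabilityMeasure μ] (a : ℝ) (ha : 0 < μ {a}) :
    (Measure.pi fun _ : Fin 3 => μ) {x | 2 * x 0 < x 1 + x 2} < 2 / 3 := by
  set π := Measure.pi fun _ : Fin 3 => μ with hπ
  have : IsProbabilityMeasure π := by rw [hπ]; infer_instance
  set E0 : Set (Fin 3 → ℝ) := {x | 2 * x 0 < x 1 + x 2} with hE0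
  set E1 : Set (Fin 3 → ℝ) := {x | 2 * x 1 < x 0 + x 2} with hE1
  set E2 : Set (Fin 3 → ℝ) := {x | 2 * x 2 < x 0 + x 1} with hE2
  set D : Set (Fin 3 → ℝ) := {x | x 0 = x 1 ∧ x 1 = x 2} with hD
  have m0 : Measurable fun x : Fin 3 → ℝ => x 0 := measurable_pi_apply 0
  have m1 : Measurable fun x : Fin 3 → ℝ => x 1 := measurable_pi_apply 1
  have m2 : Measurable fun x : Fin 3 → ℝ => x 2 := measurable_pi_apply 2
  have hE0m : MeasurableSet E0 := measurableSet_lt (m0.const_mul 2) (m1.add m2)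
  have hE1m : MeasurableSet E1 := measurableSet_lt (m1.const_mul 2) (m0.add m2)
  have hE2m : MeasurableSet E2 := measurableSet_lt (m2.const_mul 2) (m0.add m1)
  have hDm : MeasurableSet D :=
    (measurableSet_eq_fun m0 m1).inter (measurableSet_eq_fun m1 m2)
  -- equal probabilities via swaps
  have h01 : π E1 = π E0 := by
    have h := perm_invariant6 μ (Equiv.swap 0 1) E0 hE0m
    have hset : {y : Fin 3 → ℝ | (fun i => y ((Equiv.swap 0 1).symm i)) ∈ E0} = E1 := by
      ext y
      simp [hE0, hE1, Equiv.swap_apply_def, add_comm]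
    calc π E1 = π {y : Fin 3 → ℝ | (fun i => y ((Equiv.swap 0 1).symm i)) ∈ E0} := by
          rw [hset]
      _ = π E0 := h
  have h02 : π E2 = π E0 := by
    have h := perm_invariant6 μ (Equiv.swap 0 2) E0 hE0m
    have hset : {y : Fin 3 → ℝ | (fun i => y ((Equiv.swap 0 2).symm i)) ∈ E0} = E2 := by
      ext y
      simp [hE0, hE2, Equiv.swap_apply_def, add_comm]
    calc π E2 = π {y : Fin 3 → ℝ | (fun i => y ((Equiv.swap 0 2).symm i)) ∈ E0} := by
          rw [hset]
      _ = π E0 := h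
  -- pointwise bound of indicators
  have key : π E0 + π E1 + π E2 ≤ 2 * π Dᶜ := by
    have hpt : ∀ x, E0.indicator (fun _ => (1 : ℝ≥0∞)) x + E1.indicator (fun _ => (1 : ℝ≥0∞)) x
        + E2.indicator (fun _ => (1 : ℝ≥0∞)) x ≤ Set.indicator Dᶜ (fun _ => (2 : ℝ≥0∞)) x := by
      intro x
      by_cases hx : x ∈ D
      · simp only [hD, Set.mem_setOf_eq] at hx
        obtain ⟨e1, e2⟩ := hx
        have h0 : x ∉ E0 := by
          intro h; simp only [hE0, Set.mem_setOf_eq] at h; linarith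
        have h1 : x ∉ E1 := by
          intro h; simp only [hE1, Set.mem_setOf_eq] at h; linarith
        have h2 : x ∉ E2 := by
          intro h; simp only [hE2, Set.mem_setOf_eq] at h; linarith
        simp [Set.indicator_of_notMem, h0, h1, h2]
      · have hmem : x ∈ Dᶜ := hx
        rw [Set.indicator_of_mem hmem]
        have hnot : ¬(x ∈ E0 ∧ x ∈ E1 ∧ x ∈ E2) := by
          rintro ⟨hx0, hx1, hx2⟩
          simp only [hE0, hE1, hE2, Set.mem_setOf_eq] at hx0 hx1 hx2
          linarith
        by_cases hx0 : x ∈ E0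
        · by_cases hx1 : x ∈ E1
          · have hx2 : x ∉ E2 := fun h => hnot ⟨hx0, hx1, h⟩
            simp [Set.indicator_of_mem, Set.indicator_of_notMem, hx0, hx1, hx2]
            norm_num
          · simp only [Set.indicator_of_mem hx0, Set.indicator_of_notMem hx1]
            calc 1 + 0 + E2.indicator (fun _ => (1:ℝ≥0∞)) x ≤ 1 + 0 + 1 := by
                  gcongr
                  exact Set.indicator_apply_le' (fun _ => le_refl _) (fun _ => zero_le)
              _ ≤ 2 := by norm_num
        · simp only [Set.indicator_of_notMem hx0]
          calc 0 + E1.indicator (fun _ => (1:ℝ≥0∞)) x + E2.indicator (fun _ => 1) x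
              ≤ 0 + 1 + 1 := by
                gcongr <;>
                  exact Set.indicator_apply_le' (fun _ => le_refl _) (fun _ => zero_le)
            _ ≤ 2 := by norm_num
    have hint := lintegral_mono hpt (μ := π)
    rw [lintegral_add_right _ ((measurable_const (a := (1:ℝ≥0∞))).indicator hE2m),
        lintegral_add_right _ ((measurable_const (a := (1:ℝ≥0∞))).indicator hE1m),
        lintegral_indicator_const hE0m, lintegral_indicator_const hE1m,
        lintegral_indicator_const hE2m, one_mul, one_mul, one_mul,
        lintegral_indicator_const hDm.compl] at hint
    exact hint
  rw [h01, h02] at key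
  -- the diagonal has positive measure
  have hDpos : 0 < π D := by
    have hsub : Set.pi Set.univ (fun _ : Fin 3 => ({a} : Set ℝ)) ⊆ D := by
      intro x hx
      simp only [Set.mem_pi, Set.mem_univ, Set.mem_singleton_iff, forall_true_left] at hx
      exact ⟨by rw [hx 0, hx 1], by rw [hx 1, hx 2]⟩
    have := Measure.pi_pi (fun _ : Fin 3 => μ) (fun _ => ({a} : Set ℝ))
    have hpos : 0 < π (Set.pi Set.univ fun _ : Fin 3 => ({a} : Set ℝ)) := by
      rw [hπ, this, Finset.prod_const]
      positivity
    exact hpos.trans_le (measure_mono hsub)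
  have hcompl : π Dᶜ < 1 := by
    rw [measure_compl hDm (measure_ne_top _ _), measure_univ]
    exact ENNReal.sub_lt_self one_ne_top one_ne_zero hDpos.ne'
  have h3 : π E0 + π E0 + π E0 < 2 := by
    calc π E0 + π E0 + π E0 ≤ 2 * π Dᶜ := key
      _ < 2 * 1 := by
          exact ENNReal.mul_lt_mul_right (by norm_num) (by norm_num) hcompl
      _ = 2 := mul_one 2
  rw [ENNReal.lt_div_iff_mul_lt (Or.inl (by norm_num)) (Or.inl (by norm_num))]
  calc π E0 * 3 = π E0 + π E0 + π E0 := by ring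
    _ < 2 := h3
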